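/- Let G(z) = 1/( z(z+1)[(z+1)·Log(1 + 1/z) − 1] ), where Log is the principal branch of the complex logarithm; G is holomorphic on ℂ ∖ [−1, 0]. For every t with 0 < t < 1, lim_{y→0⁺} Im G(−t + iy) = −π · τ₀(t), where τ₀(t) = ( t[(1−t)log((1−t)/t) − 1]² + π² t (1−t)² )^{−1}. -/

import Mathlib

/-- `G(z) = 1/( z(z+1)[(z+1)·Log(1 + 1/z) − 1] )` with the principal logarithm. -/
noncomputable def Gc (z : ℂ) : ℂ :=
  (z * (z + 1) * ((z + 1) * Complex.log (1 + 1 / z) - 1))⁻¹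

/-- The density `τ₀(t) = ( t[(1−t)log((1−t)/t) − 1]² + π² t (1−t)² )⁻¹` for `0 < t < 1`. -/
noncomputable def tau0 (t : ℝ) : ℝ :=
  (t * ((1 - t) * Real.log ((1 - t) / t) - 1) ^ 2 + Real.pi ^ 2 * t * (1 - t) ^ 2)⁻¹

open Complex Real Topology Filter

lemma abs_arg_lt_pi_of_im_ne {w : ℂ} (hw : w.im ≠ 0) : |arg w| < π := by
  rcases lt_or_eq_of_le (arg_le_pi w) with h | h
  · exact abs_lt.2 ⟨neg_pi_lt_arg w, h⟩
  · exact absurd (Complex.arg_eq_pi_iff.1 h).2 hw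

lemma log_ratio {z : ℂ} (hz : z.im ≠ 0) :
    Complex.log (1 + 1/z) = Complex.log (z+1) - Complex.log z := by
  have hz0 : z ≠ 0 := fun h => hz (by simp [h])
  have hz1 : z + 1 ≠ 0 := by
    intro h
    have : z = -1 := by linear_combination h
    rw [this] at hz; simp at hz
  have hw : (1 + 1/z) = (z+1)/z := by field_simp
  have hwne : (1 + 1/z) ≠ 0 := by
    rw [hw]; exact div_ne_zero hz1 hz0
  have hexp : Complex.exp (Complex.log (1 + 1/z)) =
      Complex.exp (Complex.log (z+1) - Complex.log z) := by
    rw [Complex.exp_log hwne, Complex.exp_sub, Complex.exp_log hz1, Complex.exp_log hz0, hw]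
  obtain ⟨n, hn⟩ := Complex.exp_eq_exp_iff_exists_int.1 hexp
  have him : arg (1 + 1/z) = arg (z+1) - arg z + n * (2 * π) := by
    have := congrArg Complex.im hn
    simpa [Complex.log_im, Complex.add_im, Complex.sub_im, Complex.mul_im] using this
  have hwim : (1 + 1/z).im ≠ 0 := by
    have : (1 + 1/z).im = -z.im / Complex.normSq z := by
      rw [Complex.add_im, Complex.one_im, Complex.div_im]
      simp
      ring
    rw [this]
    exact div_ne_zero (neg_ne_zero.2 hz) (Complex.normSq_pos.2 hz0).ne'
  have h1 : |arg (1 + 1/z)| < π := abs_arg_lt_pi_of_im_ne hwim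
  have h2 : |arg (z+1) - arg z| < π := by
    have him1 : (z+1).im = z.im := by simp
    rcases hz.lt_or_gt with h | h
    · have a1 : arg z < 0 := arg_neg_iff.2 h
      have a2 : arg (z+1) < 0 := arg_neg_iff.2 (him1 ▸ h)
      have b1 : -π < arg z := neg_pi_lt_arg z
      have b2 : -π < arg (z+1) := neg_pi_lt_arg (z+1)
      rw [abs_lt]; constructor <;> linarith
    · have a1 : 0 ≤ arg z := arg_nonneg_iff.2 h.le
      have a2 : 0 ≤ arg (z+1) := arg_nonneg_iff.2 (by rw [him1]; exact h.le)
      have b1 : arg z < π := lt_of_le_of_ne (arg_le_pi z)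
        (fun hh => hz (arg_eq_pi_iff.1 hh).2)
      have b2 : arg (z+1) < π := lt_of_le_of_ne (arg_le_pi (z+1))
        (fun hh => hz (by rw [← him1]; exact (arg_eq_pi_iff.1 hh).2))
      rw [abs_lt]; constructor <;> linarith
  have hn0 : n = 0 := by
    by_contra h
    have h1n : (1:ℤ) ≤ |n| := Int.one_le_abs h
    have : (1:ℝ) ≤ |(n:ℝ)| := by
      rw [← Int.cast_abs]; exact_mod_cast h1n
    have habs : |(n:ℝ) * (2*π)| < 2 * π := by
      have : (n:ℝ) * (2*π) = arg (1+1/z) - (arg (z+1) - arg z) := by linarith [him]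
      rw [this]
      calc |arg (1+1/z) - (arg (z+1) - arg z)| ≤ |arg (1+1/z)| + |arg (z+1) - arg z| :=
            abs_sub _ _
        _ < π + π := add_lt_add h1 h2
        _ = 2 * π := by ring
    rw [abs_mul, abs_of_pos (by positivity : (0:ℝ) < 2*π)] at habs
    nlinarith [Real.pi_pos]
  rw [hn0] at hn
  simpa using hn

lemma integral_inv_z {z : ℂ} (hz : z.im ≠ 0) :
    ∫ s in (0:ℝ)..1, (z + (s:ℂ))⁻¹ = Complex.log (z+1) - Complex.log z := by
  have hne : ∀ s : ℝ, z + (s:ℂ) ≠ 0 := by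
    intro s h
    have := congrArg Complex.im h
    simp at this; exact hz this
  have hderiv : ∀ s ∈ Set.uIcc (0:ℝ) 1,
      HasDerivAt (fun u : ℝ => Complex.log (z + u)) (z + (s:ℂ))⁻¹ s := by
    intro s _
    have hmem : z + (s:ℂ) ∈ Complex.slitPlane := by
      rw [Complex.mem_slitPlane_iff]
      right; simpa using hz
    have h1 : HasDerivAt (fun u : ℂ => z + u) 1 (s:ℂ) := (hasDerivAt_id _).const_add z
    have h2 : HasDerivAt (fun u : ℂ => Complex.log (z + u)) ((z + (s:ℂ))⁻¹ * 1) (s:ℂ) :=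
      (Complex.hasDerivAt_log hmem).comp (s:ℂ) h1
    simpa using h2.comp_ofReal
  have hcont : Continuous fun s : ℝ => (z + (s:ℂ))⁻¹ :=
    (continuous_const.add Complex.continuous_ofReal).inv₀ hne
  have := intervalIntegral.integral_eq_sub_of_hasDerivAt hderiv (hcont.intervalIntegrable 0 1)
  simpa using this

lemma denom_eq_integral {z : ℂ} (hz : z.im ≠ 0) :
    (z+1) * Complex.log (1 + 1/z) - 1 = ∫ s in (0:ℝ)..1, ((1:ℂ) - s) / (z + s) := by
  have hne : ∀ s : ℝ, z + (s:ℂ) ≠ 0 := by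
    intro s h
    have := congrArg Complex.im h
    simp at this; exact hz this
  have hcont : Continuous fun s : ℝ => (z + (s:ℂ))⁻¹ :=
    (continuous_const.add Complex.continuous_ofReal).inv₀ hne
  have heq : ∀ s : ℝ, ((1:ℂ) - s) / (z + s) = (z+1) * (z + (s:ℂ))⁻¹ - 1 := by
    intro s
    field_simp [hne s]
    ring
  calc (z+1) * Complex.log (1 + 1/z) - 1
      = (z+1) * (∫ s in (0:ℝ)..1, (z + (s:ℂ))⁻¹) - 1 := by
        rw [integral_inv_z hz, log_ratio hz]
    _ = (∫ s in (0:ℝ)..1, (z+1) * (z + (s:ℂ))⁻¹) - ∫ s in (0:ℝ)..1, (1:ℂ) := by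
        rw [intervalIntegral.integral_const_mul]
        simp
    _ = ∫ s in (0:ℝ)..1, ((z+1) * (z + (s:ℂ))⁻¹ - 1) := by
        rw [intervalIntegral.integral_sub (f := fun s : ℝ => (z+1) * (z + (s:ℂ))⁻¹) ((continuous_const.mul hcont).intervalIntegrable _ _)
          intervalIntegrable_const]
    _ = ∫ s in (0:ℝ)..1, ((1:ℂ) - s) / (z + s) := by
        refine intervalIntegral.integral_congr fun s _ => ?_
        rw [heq]

lemma denom_im_ne {z : ℂ} (hz : z.im ≠ 0) :
    ((z+1) * Complex.log (1 + 1/z) - 1).im ≠ 0 := by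
  have hne : ∀ s : ℝ, z + (s:ℂ) ≠ 0 := by
    intro s h
    have := congrArg Complex.im h
    simp at this; exact hz this
  have hcont : Continuous fun s : ℝ => ((1:ℂ) - s) / (z + s) :=
    ((continuous_const.sub Complex.continuous_ofReal)).div
      (continuous_const.add Complex.continuous_ofReal) hne
  have him : ((z+1) * Complex.log (1 + 1/z) - 1).im
      = ∫ s in (0:ℝ)..1, (((1:ℂ) - s) / (z + s)).im := by
    rw [denom_eq_integral hz]
    exact (Complex.imCLM.intervalIntegral_comp_comm
      (hcont.intervalIntegrable _ _)).symm
  have hpt : ∀ s : ℝ, (((1:ℂ) - s) / (z + s)).im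
      = -z.im * ((1 - s) / Complex.normSq (z + s)) := by
    intro s
    rw [Complex.div_im]
    simp
    ring
  rw [him]
  have : (∫ s in (0:ℝ)..1, (((1:ℂ) - s) / (z + s)).im)
      = -z.im * ∫ s in (0:ℝ)..1, (1 - s) / Complex.normSq (z + s) := by
    rw [← intervalIntegral.integral_const_mul]
    exact intervalIntegral.integral_congr fun s _ => hpt s
  rw [this]
  have hposint : 0 < ∫ s in (0:ℝ)..1, (1 - s) / Complex.normSq (z + s) := by
    apply intervalIntegral.intervalIntegral_pos_of_pos_on
    · apply Continuous.intervalIntegrable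
      exact (continuous_const.sub continuous_id).div
        ((Complex.continuous_normSq).comp (continuous_const.add Complex.continuous_ofReal))
        (fun s => (Complex.normSq_pos.2 (hne s)).ne')
    · intro s hs
      exact div_pos (by linarith [hs.2]) (Complex.normSq_pos.2 (hne s))
    · norm_num
  exact mul_ne_zero (neg_ne_zero.2 hz) hposint.ne'

lemma log_gt_aux {x : ℝ} (hx : 0 < x ∨ x < -1) : 1/(x+1) < Real.log (1 + 1/x) := by
  have hx0 : x ≠ 0 := by rcases hx with h | h <;> intro hh <;> rw [hh] at h <;> linarith
  have hx1 : x + 1 ≠ 0 := by rcases hx with h | h <;> intro hh <;> linarith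
  have hu : (0:ℝ) < x/(x+1) := by
    rcases hx with h | h
    · positivity
    · apply div_pos_of_neg_of_neg <;> linarith
  have hu1 : x/(x+1) ≠ 1 := by
    intro h
    rw [div_eq_one_iff_eq hx1] at h
    linarith
  have hlt := Real.log_lt_sub_one_of_pos hu hu1
  have e1 : Real.log (x/(x+1)) = - Real.log (1 + 1/x) := by
    rw [← Real.log_inv]
    congr 1
    field_simp
  have e2 : x/(x+1) - 1 = -(1/(x+1)) := by field_simp; ring
  rw [e1, e2] at hlt
  linarith

lemma real_denom_ne {x : ℝ} (hx : 0 < x ∨ x < -1) : (x+1) * Real.log (1 + 1/x) ≠ 1 := by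
  have key := log_gt_aux hx
  rcases hx with h | h
  · have := mul_lt_mul_of_pos_left key (by linarith : (0:ℝ) < x+1)
    rw [mul_one_div, div_self (by linarith : x+1 ≠ 0)] at this
    exact ne_of_gt this
  · have := mul_lt_mul_of_neg_left key (by linarith : x+1 < 0)
    rw [mul_one_div, div_self (by linarith : x+1 ≠ 0)] at this
    exact ne_of_lt this

lemma seg_facts {z : ℂ} (hz : z ∈ (Complex.ofReal '' Set.Icc (-1:ℝ) 0)ᶜ) :
    z ≠ 0 ∧ z + 1 ≠ 0 := by
  constructor
  · intro h
    exact hz ⟨0, ⟨by norm_num, le_refl 0⟩, by simp [h]⟩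
  · intro h
    have hz1 : z = -1 := by linear_combination h
    exact hz ⟨-1, ⟨le_refl _, by norm_num⟩, by simp [hz1]⟩

lemma real_facts {z : ℂ} (hz : z ∈ (Complex.ofReal '' Set.Icc (-1:ℝ) 0)ᶜ)
    (him : z.im = 0) : z = ((z.re : ℝ) : ℂ) ∧ (0 < z.re ∨ z.re < -1) := by
  have hzre : z = ((z.re : ℝ) : ℂ) := by
    apply Complex.ext <;> simp [him]
  refine ⟨hzre, ?_⟩
  by_contra h
  push_neg at h
  exact hz ⟨z.re, ⟨h.2, h.1⟩, hzre.symm⟩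

lemma one_add_inv_pos {x : ℝ} (hx : 0 < x ∨ x < -1) : 0 < 1 + 1/x := by
  have hd : 1 + 1/x = (x+1)/x := by
    have hx0 : x ≠ 0 := by rcases hx with h | h <;> intro hh <;> rw [hh] at h <;> linarith
    field_simp
  rw [hd]
  rcases hx with h | h
  · positivity
  · exact div_pos_of_neg_of_neg (by linarith) (by linarith)

lemma denom_ne_zero {z : ℂ} (hz : z ∈ (Complex.ofReal '' Set.Icc (-1:ℝ) 0)ᶜ) :
    (z+1) * Complex.log (1 + 1/z) - 1 ≠ 0 := by
  rcases eq_or_ne z.im 0 with him | him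
  · obtain ⟨hzre, hre⟩ := real_facts hz him
    set x := z.re with hxdef
    have hcast : (1 : ℂ) + 1/((x:ℝ):ℂ) = ((1 + 1/x : ℝ) : ℂ) := by push_cast; ring
    have hpos := one_add_inv_pos hre
    rw [hzre, hcast, ← Complex.ofReal_log hpos.le]
    have hc2 : (((x:ℝ):ℂ)+1) * ((Real.log (1+1/x) : ℝ):ℂ) - 1
        = (((x+1)*Real.log (1+1/x) - 1 : ℝ) : ℂ) := by push_cast; ring
    rw [hc2]
    exact_mod_cast sub_ne_zero.2 (real_denom_ne hre)
  · intro h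
    exact denom_im_ne him (by rw [h]; simp)

lemma slit_mem {z : ℂ} (hz : z ∈ (Complex.ofReal '' Set.Icc (-1:ℝ) 0)ᶜ) :
    1 + 1/z ∈ Complex.slitPlane := by
  rw [Complex.mem_slitPlane_iff]
  rcases eq_or_ne z.im 0 with him | him
  · obtain ⟨hzre, hre⟩ := real_facts hz him
    left
    have hcast : (1 : ℂ) + 1/((z.re:ℝ):ℂ) = ((1 + 1/z.re : ℝ) : ℂ) := by push_cast; ring
    rw [hzre, hcast, Complex.ofReal_re]
    exact one_add_inv_pos hre
  · right
    have hz0 : z ≠ 0 := (seg_facts hz).1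
    have : (1 + 1/z).im = -z.im / Complex.normSq z := by
      rw [Complex.add_im, Complex.one_im, Complex.div_im]
      simp
      ring
    rw [this]
    exact div_ne_zero (neg_ne_zero.2 him) (Complex.normSq_pos.2 hz0).ne'

lemma Gc_diff : DifferentiableOn ℂ Gc ((Complex.ofReal '' Set.Icc (-1 : ℝ) 0)ᶜ) := by
  intro z hz
  obtain ⟨hz0, hz1⟩ := seg_facts hz
  have hlog : DifferentiableAt ℂ (fun w : ℂ => Complex.log (1 + 1/w)) z := by
    have hin : DifferentiableAt ℂ (fun w : ℂ => 1 + 1/w) z :=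
      (differentiableAt_const _).add ((differentiableAt_const 1).div differentiableAt_id hz0)
    exact (Complex.differentiableAt_log (slit_mem hz)).comp z hin
  have hden : DifferentiableAt ℂ
      (fun w : ℂ => w * (w + 1) * ((w + 1) * Complex.log (1 + 1/w) - 1)) z :=
    (differentiableAt_id.mul (differentiableAt_id.add_const 1)).mul
      (((differentiableAt_id.add_const 1).mul hlog).sub_const 1)
  have hne : z * (z + 1) * ((z + 1) * Complex.log (1 + 1/z) - 1) ≠ 0 :=
    mul_ne_zero (mul_ne_zero hz0 hz1) (denom_ne_zero hz)
  exact (hden.inv hne).differentiableWithinAt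

theorem Gc_limit {t : ℝ} (ht : t ∈ Set.Ioo (0 : ℝ) 1) :
    Filter.Tendsto (fun y : ℝ => (Gc (-(t : ℂ) + (y : ℂ) * Complex.I)).im)
      (nhdsWithin 0 (Set.Ioi 0)) (nhds (-Real.pi * tau0 t)) := by
  obtain ⟨ht0, ht1⟩ := ht
  have h1t : (0:ℝ) < 1 - t := by linarith
  set L := Real.log ((1 - t)/t) with hL
  set A := (1 - t) * L - 1 with hA
  have hzne : ∀ y : ℝ, -(t:ℂ) + (y:ℂ)*I ≠ 0 := by
    intro y h
    have := congrArg Complex.re h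
    simp at this
    linarith
  have htC : -(t:ℂ) ≠ 0 := by
    intro h
    rw [neg_eq_zero, Complex.ofReal_eq_zero] at h
    linarith
  -- limit of z
  have hz : Filter.Tendsto (fun y : ℝ => -(t:ℂ) + (y:ℂ)*I) (𝓝[>] (0:ℝ)) (𝓝 (-(t:ℂ))) := by
    have hc : Continuous fun y : ℝ => -(t:ℂ) + (y:ℂ)*I := by continuity
    have h := (hc.tendsto 0).mono_left (nhdsWithin_le_nhds (s := Set.Ioi (0:ℝ)))
    simpa using h
  -- x0
  have htC' : (t:ℂ) ≠ 0 := Complex.ofReal_ne_zero.2 (by linarith)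
  have hx0 : (1:ℂ) + 1/(-(t:ℂ)) = (((-(1-t)/t : ℝ)):ℂ) := by
    push_cast
    field_simp
    ring
  -- limit of w within lower half plane
  have hwlim : Filter.Tendsto (fun y : ℝ => 1 + 1/(-(t:ℂ) + (y:ℂ)*I))
      (𝓝[>] (0:ℝ)) (𝓝[{z : ℂ | z.im < 0}] ((((-(1-t)/t : ℝ)):ℂ))) := by
    rw [tendsto_nhdsWithin_iff]
    constructor
    · rw [← hx0]
      exact tendsto_const_nhds.add (tendsto_const_nhds.div hz htC)
    · filter_upwards [self_mem_nhdsWithin] with y hy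
      have hy0 : 0 < y := hy
      show (1 + 1/(-(t:ℂ) + (y:ℂ)*I)).im < 0
      have : (1 + 1/(-(t:ℂ) + (y:ℂ)*I)).im
          = -y / Complex.normSq (-(t:ℂ) + (y:ℂ)*I) := by
        rw [Complex.add_im, Complex.one_im, Complex.div_im]
        simp
        ring
      rw [this]
      exact div_neg_of_neg_of_pos (by linarith) (Complex.normSq_pos.2 (hzne y))
  have hx0re : ((((-(1-t)/t : ℝ)):ℂ)).re < 0 := by
    rw [Complex.ofReal_re]
    apply div_neg_of_neg_of_pos <;> linarith
  have hx0im : ((((-(1-t)/t : ℝ)):ℂ)).im = 0 := Complex.ofReal_im _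
  have habs : Real.log ‖((((-(1-t)/t : ℝ)):ℂ))‖ = L := by
    rw [Complex.norm_real, Real.norm_eq_abs, abs_of_neg (by apply div_neg_of_neg_of_pos <;> linarith), hL]
    congr 1
    field_simp
  have hloglim : Filter.Tendsto (fun y : ℝ => Complex.log (1 + 1/(-(t:ℂ) + (y:ℂ)*I)))
      (𝓝[>] (0:ℝ)) (𝓝 ((L:ℂ) - Real.pi * I)) := by
    have := (Complex.tendsto_log_nhdsWithin_im_neg_of_re_neg_of_im_zero hx0re hx0im).comp hwlim
    rwa [habs] at this
  -- limit of denominator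
  set D : ℂ := -(t:ℂ) * (-(t:ℂ) + 1) * ((-(t:ℂ) + 1) * ((L:ℂ) - Real.pi * I) - 1) with hD
  have hdenlim : Filter.Tendsto
      (fun y : ℝ => (-(t:ℂ) + (y:ℂ)*I) * ((-(t:ℂ) + (y:ℂ)*I) + 1) *
        (((-(t:ℂ) + (y:ℂ)*I) + 1) * Complex.log (1 + 1/(-(t:ℂ) + (y:ℂ)*I)) - 1))
      (𝓝[>] (0:ℝ)) (𝓝 D) :=
    (hz.mul (hz.add tendsto_const_nhds)).mul
      (((hz.add tendsto_const_nhds).mul hloglim).sub tendsto_const_nhds)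
  -- D in coordinates
  have hDco : D = ((-t*(1-t)*A : ℝ) : ℂ) + ((t*(1-t)^2*Real.pi : ℝ) : ℂ) * I := by
    rw [hD, hA]
    push_cast
    ring
  have hDim : D.im = t*(1-t)^2*Real.pi := by
    rw [hDco, Complex.add_im, Complex.ofReal_im, Complex.mul_im, Complex.ofReal_re,
      Complex.I_im, Complex.ofReal_im, Complex.I_re]
    ring
  have hDne : D ≠ 0 := by
    intro h
    rw [h, Complex.zero_im] at hDim
    have hpos : (0:ℝ) < t*(1-t)^2*Real.pi := by positivity
    linarith
  have hGlim : Filter.Tendsto (fun y : ℝ => Gc (-(t:ℂ) + (y:ℂ)*I)) (𝓝[>] (0:ℝ)) (𝓝 D⁻¹) := by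
    unfold Gc
    exact hdenlim.inv₀ hDne
  have himlim : Filter.Tendsto (fun y : ℝ => (Gc (-(t:ℂ) + (y:ℂ)*I)).im)
      (𝓝[>] (0:ℝ)) (𝓝 (D⁻¹.im)) :=
    (Complex.continuous_im.tendsto _).comp hGlim
  have hfinal : D⁻¹.im = -Real.pi * tau0 t := by
    rw [hDco, Complex.inv_im, Complex.normSq_add_mul_I, Complex.add_im,
      Complex.ofReal_im, Complex.mul_im, Complex.ofReal_re, Complex.I_im,
      Complex.ofReal_im, Complex.I_re]
    have htau : tau0 t = (t*A^2 + Real.pi^2*t*(1-t)^2)⁻¹ := by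
      rw [tau0, hA, hL]
    rw [htau]
    have hB : (0:ℝ) < t*A^2 + Real.pi^2*t*(1-t)^2 := by positivity
    have hC : (0:ℝ) < (-t*(1-t)*A)^2 + (t*(1-t)^2*Real.pi)^2 := by positivity
    field_simp
    ring
  rwa [hfinal] at himlim

/-- `G` is holomorphic on `ℂ ∖ [−1,0]` and, for `0 < t < 1`,
`Im G(−t + iy) → −π·τ₀(t)` as `y → 0⁺`. -/
theorem Gc_holomorphic_and_boundary_imaginary_part :
    DifferentiableOn ℂ Gc ((Complex.ofReal '' Set.Icc (-1 : ℝ) 0)ᶜ) ∧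
    ∀ t : ℝ, t ∈ Set.Ioo (0 : ℝ) 1 →
      Filter.Tendsto (fun y : ℝ => (Gc (-(t : ℂ) + (y : ℂ) * Complex.I)).im)
        (nhdsWithin 0 (Set.Ioi 0)) (nhds (-Real.pi * tau0 t)) := by
  exact ⟨Gc_diff, fun t ht => Gc_limit ht⟩
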